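/- Fix ω > 0 and η > 0 and let t* > 5/4 be the unique solution of (t* − 5/4) e^{t*} = 4η/ω. Define g(t) = ω (8ηt + 2η + ω e^{t}) / (4ηt + 3η + ω e^{t}) for t ≥ 0. Then g is strictly increasing on [0, t*] and strictly decreasing on [t*, ∞); in particular g attains a unique global maximum on [0, ∞) at t = t*, so the Shiha hazard rate h(y; ω, η) = g(ωy) attains a unique maximum at y* = t*/ω. -/

import Mathlib

open Real

lemma phi_mono : StrictMonoOn (fun t : ℝ => (t - 5/4) * Real.exp t) (Set.Ici (1/4 : ℝ)) := by
  apply strictMonoOn_of_deriv_pos (convex_Ici _) (by fun_prop)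
  intro x hx
  rw [interior_Ici] at hx
  have h : HasDerivAt (fun t : ℝ => (t - 5/4) * Real.exp t)
      (1 * Real.exp x + (x - 5/4) * Real.exp x) x :=
    ((hasDerivAt_id x).sub_const (5/4)).mul (Real.hasDerivAt_exp x)
  rw [h.deriv]
  have := Real.exp_pos x
  have hx' : (1:ℝ)/4 < x := hx
  nlinarith

noncomputable def shihaHazard (ω η y : ℝ) : ℝ :=
  ω * (ω + (2 * η + 8 * ω * η * y) * Real.exp (-ω * y))
    / (ω + (3 * η + 4 * ω * η * y) * Real.exp (-ω * y))

theorem shiha_hazard_unique_max (ω η tstar : ℝ) (hω : 0 < ω) (hη : 0 < η)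
    (ht : 5 / 4 < tstar) (heq : (tstar - 5 / 4) * Real.exp tstar = 4 * η / ω) :
    StrictMonoOn
      (fun t : ℝ => ω * (8 * η * t + 2 * η + ω * Real.exp t) / (4 * η * t + 3 * η + ω * Real.exp t))
      (Set.Icc 0 tstar) ∧
    StrictAntiOn
      (fun t : ℝ => ω * (8 * η * t + 2 * η + ω * Real.exp t) / (4 * η * t + 3 * η + ω * Real.exp t))
      (Set.Ici tstar) ∧
    (∀ t : ℝ, 0 ≤ t → t ≠ tstar →
      ω * (8 * η * t + 2 * η + ω * Real.exp t) / (4 * η * t + 3 * η + ω * Real.exp t)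
        < ω * (8 * η * tstar + 2 * η + ω * Real.exp tstar)
            / (4 * η * tstar + 3 * η + ω * Real.exp tstar)) ∧
    (∀ y : ℝ, 0 ≤ y → y ≠ tstar / ω →
      shihaHazard ω η y < shihaHazard ω η (tstar / ω)) := by
  set f : ℝ → ℝ := fun t : ℝ =>
    ω * (8 * η * t + 2 * η + ω * Real.exp t) / (4 * η * t + 3 * η + ω * Real.exp t) with hf
  -- denominator positive
  have hD : ∀ t : ℝ, 0 ≤ t → 0 < 4 * η * t + 3 * η + ω * Real.exp t := by
    intro t htt
    have := Real.exp_pos t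
    nlinarith
  -- derivative
  have hderiv : ∀ t : ℝ, 0 ≤ t →
      HasDerivAt f ((ω * η * (16 * η + (5 - 4 * t) * ω * Real.exp t))
        / (4 * η * t + 3 * η + ω * Real.exp t) ^ 2) t := by
    intro t htt
    have hN : HasDerivAt (fun t : ℝ => ω * (8 * η * t + 2 * η + ω * Real.exp t))
        (ω * (8 * η + ω * Real.exp t)) t := by
      have h1 : HasDerivAt (fun t : ℝ => 8 * η * t + 2 * η + ω * Real.exp t)
          (8 * η + ω * Real.exp t) t := by
        exact ((((hasDerivAt_id t).const_mul (8 * η)).add_const (2 * η)).add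
          ((Real.hasDerivAt_exp t).const_mul ω)).congr_deriv (by simp)
      exact h1.const_mul ω
    have hDd : HasDerivAt (fun t : ℝ => 4 * η * t + 3 * η + ω * Real.exp t)
        (4 * η + ω * Real.exp t) t := by
      exact ((((hasDerivAt_id t).const_mul (4 * η)).add_const (3 * η)).add
          ((Real.hasDerivAt_exp t).const_mul ω)).congr_deriv (by simp)
    have hne : (4 * η * t + 3 * η + ω * Real.exp t) ≠ 0 := ne_of_gt (hD t htt)
    have := hN.div hDd hne
    refine this.congr_deriv ?_
    congr 1
    ring
  -- sign of the key quantity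
  have hphi := phi_mono
  have hkeypos : ∀ t : ℝ, 0 ≤ t → t < tstar → 0 < 16 * η + (5 - 4 * t) * ω * Real.exp t := by
    intro t h0 hlt
    have het := Real.exp_pos t
    rcases le_or_gt t (5/4) with hc | hc
    · have hnn : 0 ≤ (5 - 4*t) * (ω * Real.exp t) :=
        mul_nonneg (by linarith) (mul_pos hω het).le
      nlinarith
    · have h1 : (t - 5/4) * Real.exp t < (tstar - 5/4) * Real.exp tstar := by
        apply hphi (by simp; linarith) (by simp; linarith) hlt
      rw [heq] at h1
      have : ω * ((t - 5/4) * Real.exp t) < 4 * η := by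
        rw [lt_div_iff₀ hω] at h1; linarith [h1]
      nlinarith
  have hkeyneg : ∀ t : ℝ, tstar < t → 16 * η + (5 - 4 * t) * ω * Real.exp t < 0 := by
    intro t hlt
    have het := Real.exp_pos t
    have h1 : (tstar - 5/4) * Real.exp tstar < (t - 5/4) * Real.exp t := by
      apply hphi (by simp; linarith) (by simp; linarith) hlt
    rw [heq] at h1
    have : 4 * η < ω * ((t - 5/4) * Real.exp t) := by
      rw [div_lt_iff₀ hω] at h1; linarith [h1]
    nlinarith
  -- continuity
  have hcont : ∀ s : Set ℝ, (∀ x ∈ s, (0:ℝ) ≤ x) → ContinuousOn f s := by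
    intro s hs
    apply ContinuousOn.div (by fun_prop) (by fun_prop)
    intro x hx
    exact ne_of_gt (hD x (hs x hx))
  have hmono : StrictMonoOn f (Set.Icc 0 tstar) := by
    apply strictMonoOn_of_deriv_pos (convex_Icc _ _)
      (hcont _ (fun x hx => hx.1))
    intro x hx
    rw [interior_Icc] at hx
    rw [(hderiv x hx.1.le).deriv]
    have := hkeypos x hx.1.le hx.2
    have := hD x hx.1.le
    positivity
  have hanti : StrictAntiOn f (Set.Ici tstar) := by
    apply strictAntiOn_of_deriv_neg (convex_Ici _)
      (hcont _ (fun x hx => by have : tstar ≤ x := hx; linarith))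
    intro x hx
    rw [interior_Ici] at hx
    have hx' : tstar < x := hx
    have hx0 : (0:ℝ) ≤ x := by linarith
    rw [(hderiv x hx0).deriv]
    apply div_neg_of_neg_of_pos
    · exact mul_neg_of_pos_of_neg (mul_pos hω hη) (hkeyneg x hx')
    · have := hD x hx0
      positivity
  have hmax : ∀ t : ℝ, 0 ≤ t → t ≠ tstar → f t < f tstar := by
    intro t h0 hne
    rcases lt_or_gt_of_ne hne with h | h
    · exact hmono ⟨h0, h.le⟩ ⟨by linarith, le_refl _⟩ h
    · exact hanti (le_refl tstar) h.le h
  refine ⟨hmono, hanti, hmax, ?_⟩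
  have hhaz : ∀ y : ℝ, 0 ≤ y → shihaHazard ω η y = f (ω * y) := by
    intro y hy
    have h1 : 0 ≤ ω * y := by positivity
    have hDne := ne_of_gt (hD (ω * y) h1)
    have hexp := Real.exp_pos (ω * y)
    unfold shihaHazard
    rw [hf]
    simp only
    rw [neg_mul, Real.exp_neg]
    rw [div_eq_div_iff]
    · field_simp
      ring
    · have : 0 < ω + (3 * η + 4 * ω * η * y) * (Real.exp (ω * y))⁻¹ := by positivity
      linarith
    · linarith [hD (ω * y) h1]
  intro y hy hne
  have h1 : ω * (tstar / ω) = tstar := by field_simp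
  have h2 : 0 ≤ tstar / ω := by positivity
  rw [hhaz y hy, hhaz _ h2, h1]
  apply hmax _ (by positivity)
  intro hc
  apply hne
  field_simp at hc ⊢
  linarith [hc]
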